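/- Let X be a real Hilbert space and let H, A, P : X → X be bounded linear operators with P self-adjoint, and suppose ⟨A x, P (H x)⟩ + ⟨H x, P (A x)⟩ ≤ 0 for all x ∈ X. Let x : ℝ → X be differentiable with H (x'(t)) = A (x(t)) for all t ≥ 0. Then the function t ↦ ⟨H (x(t)), P (H (x(t)))⟩ is nonincreasing on [0, ∞). -/

import Mathlib

open Set
open scoped RealInnerProductSpace

/-- Lyapunov stability for a PIE `H ẋ(t) = A x(t)`: if `P` is a self-adjoint bounded
operator with `⟨Ax, P(Hx)⟩ + ⟨Hx, P(Ax)⟩ ≤ 0` for all `x` (i.e. `A*PH + H*PA ≼ 0`),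
then `t ↦ ⟨H x(t), P (H x(t))⟩` is nonincreasing on `[0, ∞)`. -/
theorem pie_lyapunov_nonincreasing {X : Type*} [NormedAddCommGroup X]
    [InnerProductSpace ℝ X] [CompleteSpace X]
    (H A P : X →L[ℝ] X)
    (hP : ∀ x y : X, ⟪P x, y⟫ = ⟪x, P y⟫)
    (hdiss : ∀ x : X, ⟪A x, P (H x)⟫ + ⟪H x, P (A x)⟫ ≤ 0)
    (x x' : ℝ → X)
    (hderiv : ∀ t : ℝ, 0 ≤ t → HasDerivAt x (x' t) t)
    (hPIE : ∀ t : ℝ, 0 ≤ t → H (x' t) = A (x t)) :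
    AntitoneOn (fun t => ⟪H (x t), P (H (x t))⟫) (Ici (0:ℝ)) := by
  have key : ∀ t : ℝ, 0 ≤ t →
      HasDerivAt (fun t => ⟪H (x t), P (H (x t))⟫)
        (⟪A (x t), P (H (x t))⟫ + ⟪H (x t), P (A (x t))⟫) t := by
    intro t ht
    have hx := hderiv t ht
    have hHx : HasDerivAt (fun s => H (x s)) (H (x' t)) t :=
      by simpa [Function.comp_def] using (H.hasFDerivAt.comp t hx.hasFDerivAt).hasDerivAt
    have hPHx : HasDerivAt (fun s => P (H (x s))) (P (H (x' t))) t :=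
      by simpa [Function.comp_def] using (P.hasFDerivAt.comp t hHx.hasFDerivAt).hasDerivAt
    have := hHx.inner ℝ hPHx
    rw [hPIE t ht] at this
    convert this using 1
    exacts [rfl, rfl, add_comm _ _]
  apply antitoneOn_of_hasDerivWithinAt_nonpos (convex_Ici 0)
    (f' := fun t => ⟪A (x t), P (H (x t))⟫ + ⟪H (x t), P (A (x t))⟫)
  · intro t ht
    exact (key t ht).continuousAt.continuousWithinAt
  · intro t ht
    rw [interior_Ici] at ht
    exact (key t ht.le).hasDerivWithinAt
  · intro t ht
    exact hdiss (x t)
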